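/- For every complete lattice S there exists a Girard quantale G whose right-sided part is order-isomorphic to S and whose left-sided part is order-isomorphic to S^op. -/

import Mathlib

/-- A quantale: a complete lattice with an associative multiplication
distributing over arbitrary joins in both variables. -/
class Quantale' (α : Type*) extends CompleteLattice α, Mul α where
  mul_assoc : ∀ a b c : α, a * b * c = a * (b * c)
  mul_sSup : ∀ (a : α) (s : Set α), a * sSup s = ⨆ b ∈ s, a * b
  sSup_mul : ∀ (s : Set α) (a : α), sSup s * a = ⨆ b ∈ s, b * a

/-- `d` is a cyclic dualizing element of the quantale `Q`. -/
def IsCyclicDualizing {Q : Type*} [Quantale' Q] (d : Q) : Prop :=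
  (∀ a b : Q, a * b ≤ d ↔ b * a ≤ d) ∧
  (∀ a : Q, sSup {x : Q | x * sSup {y : Q | a * y ≤ d} ≤ d} = a) ∧
  (∀ a : Q, sSup {y : Q | sSup {x : Q | x * a ≤ d} * y ≤ d} = a)

namespace Stmt18Aux

universe u

/-- Phase semigroup: a zero, a unit, and "matrix units" indexed by `S × S`. -/
inductive Ph (S : Type u) : Type u
  | zero : Ph S
  | one : Ph S
  | pr : S → S → Ph S

variable {S : Type u} [CompleteLattice S]

open Classical in
noncomputable instance : Mul (Ph S) :=
  ⟨fun x y => match x, y with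
    | .zero, _ => .zero
    | _, .zero => .zero
    | .one, y => y
    | x, .one => x
    | .pr a l, .pr b m => if b ≤ l then .zero else .pr a m⟩

@[simp] lemma zero_mul (y : Ph S) : (Ph.zero * y) = Ph.zero := by cases y <;> rfl
@[simp] lemma mul_zero (x : Ph S) : (x * Ph.zero) = Ph.zero := by cases x <;> rfl
@[simp] lemma one_mul (y : Ph S) : (Ph.one * y) = y := by cases y <;> rfl
@[simp] lemma mul_one (x : Ph S) : (x * Ph.one) = x := by cases x <;> rfl

open Classical in
lemma pr_mul_pr (a l b m : S) :
    (Ph.pr a l * Ph.pr b m) = if b ≤ l then Ph.zero else Ph.pr a m := rfl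

lemma ph_assoc (x y z : Ph S) : x * y * z = x * (y * z) := by
  cases x with
  | zero => simp
  | one => simp
  | pr a l =>
    cases y with
    | zero => simp
    | one => simp
    | pr b m =>
      cases z with
      | zero => simp
      | one => simp
      | pr c n =>
        by_cases h1 : b ≤ l <;> by_cases h2 : c ≤ m <;>
          simp [pr_mul_pr, h1, h2]

/-- The cyclic subset of the phase semigroup. -/
def D : Set (Ph S) := fun x => match x with
  | .pr a b => a ≤ b
  | _ => True

@[simp] lemma mem_D_zero : (Ph.zero : Ph S) ∈ D := trivial
@[simp] lemma mem_D_one : (Ph.one : Ph S) ∈ D := trivial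
@[simp] lemma mem_D_pr {a b : S} : (Ph.pr a b) ∈ D ↔ a ≤ b := Iff.rfl

lemma pr_mul_mem_D {a l b m : S} :
    (Ph.pr a l * Ph.pr b m) ∈ D ↔ (b ≤ l ∨ a ≤ m) := by
  rw [pr_mul_pr]
  split_ifs with h <;> simp [h]

lemma mulD_comm (x y : Ph S) : x * y ∈ D ↔ y * x ∈ D := by
  cases x <;> cases y <;> simp [pr_mul_mem_D] <;> tauto

/-- Polar of a set. -/
def pol (X : Set (Ph S)) : Set (Ph S) := {w | ∀ x ∈ X, x * w ∈ D}

lemma mem_pol {X : Set (Ph S)} {w : Ph S} : w ∈ pol X ↔ ∀ x ∈ X, x * w ∈ D := Iff.rfl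

lemma pol_anti {X Y : Set (Ph S)} (h : X ⊆ Y) : pol Y ⊆ pol X :=
  fun w hw x hx => hw x (h hx)

lemma subset_polpol (X : Set (Ph S)) : X ⊆ pol (pol X) :=
  fun x hx w hw => (mulD_comm x w).mp (hw x hx)

lemma pol_pol_pol (X : Set (Ph S)) : pol (pol (pol X)) = pol X :=
  Set.Subset.antisymm (pol_anti (subset_polpol X)) (subset_polpol (pol X))

lemma polpol_mono {X Y : Set (Ph S)} (h : X ⊆ Y) : pol (pol X) ⊆ pol (pol Y) :=
  pol_anti (pol_anti h)

/-- The Girard quantale: the complete lattice of facts (closed sets). -/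
abbrev Gq (S : Type u) [CompleteLattice S] : Type u := {X : Set (Ph S) // pol (pol X) = X}

lemma gq_le_iff {A B : Gq S} : A ≤ B ↔ A.1 ⊆ B.1 := Iff.rfl

noncomputable def toGq (X : Set (Ph S)) : Gq S := ⟨pol (pol X), pol_pol_pol (pol X)⟩

lemma gq_gc : GaloisConnection (toGq (S := S)) Subtype.val := by
  intro X A
  constructor
  · intro h; exact (subset_polpol X).trans h
  · intro h
    show pol (pol X) ⊆ A.1
    have h2 := polpol_mono h
    rwa [A.2] at h2

noncomputable instance : CompleteLattice (Gq S) :=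
  (gq_gc.toGaloisInsertion fun A => subset_polpol A.1).liftCompleteLattice

/-- Set-wise product. -/
def mulSet (X Y : Set (Ph S)) : Set (Ph S) := {m | ∃ x ∈ X, ∃ y ∈ Y, x * y = m}

lemma mulSet_mono {X X' Y Y' : Set (Ph S)} (h1 : X ⊆ X') (h2 : Y ⊆ Y') :
    mulSet X Y ⊆ mulSet X' Y' := by
  rintro _ ⟨x, hx, y, hy, rfl⟩
  exact ⟨x, h1 hx, y, h2 hy, rfl⟩

lemma mulSet_assoc (X Y Z : Set (Ph S)) :
    mulSet (mulSet X Y) Z = mulSet X (mulSet Y Z) := by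
  ext w
  constructor
  · rintro ⟨_, ⟨x, hx, y, hy, rfl⟩, z, hz, rfl⟩
    exact ⟨x, hx, y * z, ⟨y, hy, z, hz, rfl⟩, (ph_assoc x y z).symm⟩
  · rintro ⟨x, hx, _, ⟨y, hy, z, hz, rfl⟩, rfl⟩
    exact ⟨x * y, ⟨x, hx, y, hy, rfl⟩, z, hz, ph_assoc x y z⟩

lemma mulSet_polpol_right (X Y : Set (Ph S)) :
    mulSet X (pol (pol Y)) ⊆ pol (pol (mulSet X Y)) := by
  rintro _ ⟨x, hx, y, hy, rfl⟩ w hw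
  have hwx : w * x ∈ pol Y := by
    intro y' hy'
    have h1 : (x * y') * w ∈ D := hw _ ⟨x, hx, y', hy', rfl⟩
    have h2 : w * (x * y') ∈ D := (mulD_comm _ _).mp h1
    rw [← ph_assoc] at h2
    exact (mulD_comm _ _).mp h2
  have h3 : (w * x) * y ∈ D := hy _ hwx
  rwa [ph_assoc] at h3

lemma mulSet_polpol_left (X Y : Set (Ph S)) :
    mulSet (pol (pol X)) Y ⊆ pol (pol (mulSet X Y)) := by
  rintro _ ⟨x, hx, y, hy, rfl⟩ w hw
  have hyw : y * w ∈ pol X := by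
    intro x' hx'
    have h1 : (x' * y) * w ∈ D := hw _ ⟨x', hx', y, hy, rfl⟩
    rwa [ph_assoc] at h1
  have h3 : (y * w) * x ∈ D := hx _ hyw
  have h4 : x * (y * w) ∈ D := (mulD_comm _ _).mp h3
  rw [← ph_assoc] at h4
  exact (mulD_comm _ _).mp h4

lemma cl_mulSet_left (X Y : Set (Ph S)) :
    pol (pol (mulSet (pol (pol X)) Y)) = pol (pol (mulSet X Y)) := by
  apply Set.Subset.antisymm
  · have h := polpol_mono (mulSet_polpol_left X Y)
    rwa [pol_pol_pol (pol (mulSet X Y))] at h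
  · exact polpol_mono (mulSet_mono (subset_polpol X) (fun _ h => h))

lemma cl_mulSet_right (X Y : Set (Ph S)) :
    pol (pol (mulSet X (pol (pol Y)))) = pol (pol (mulSet X Y)) := by
  apply Set.Subset.antisymm
  · have h := polpol_mono (mulSet_polpol_right X Y)
    rwa [pol_pol_pol (pol (mulSet X Y))] at h
  · exact polpol_mono (mulSet_mono (fun _ h => h) (subset_polpol Y))

noncomputable instance : Mul (Gq S) :=
  ⟨fun A B => ⟨pol (pol (mulSet A.1 B.1)), pol_pol_pol (pol (mulSet A.1 B.1))⟩⟩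

lemma gq_mul_val (A B : Gq S) : (A * B).1 = pol (pol (mulSet A.1 B.1)) := rfl

lemma mul_le_iff {A B C : Gq S} : A * B ≤ C ↔ mulSet A.1 B.1 ⊆ C.1 := by
  constructor
  · intro h
    exact (subset_polpol (mulSet A.1 B.1)).trans h
  · intro h
    show pol (pol (mulSet A.1 B.1)) ⊆ C.1
    have h2 := polpol_mono h
    rwa [C.2] at h2

lemma gq_sSup_val (s : Set (Gq S)) :
    (sSup s).1 = pol (pol (⋃ A ∈ s, (A : Gq S).1)) := by
  set U : Set (Ph S) := ⋃ A ∈ s, (A : Gq S).1 with hU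
  have h1 : sSup s ≤ ⟨pol (pol U), pol_pol_pol (pol U)⟩ := by
    apply sSup_le
    intro A hA
    show A.1 ⊆ pol (pol U)
    exact (Set.subset_iUnion₂ (s := fun A _ => (A : Gq S).1) A hA).trans (subset_polpol U)
  have h2 : (⟨pol (pol U), pol_pol_pol (pol U)⟩ : Gq S) ≤ sSup s := by
    show pol (pol U) ⊆ (sSup s).1
    have hU2 : U ⊆ (sSup s).1 := by
      apply Set.iUnion₂_subset
      intro A hA
      exact le_sSup hA
    have h3 := polpol_mono hU2
    rwa [(sSup s).2] at h3
  have := le_antisymm h1 h2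
  rw [this]

noncomputable instance gqQuantale : Quantale' (Gq S) :=
  { (inferInstance : CompleteLattice (Gq S)), (inferInstance : Mul (Gq S)) with
    mul_assoc := by
      intro A B C
      apply Subtype.ext
      show pol (pol (mulSet (pol (pol (mulSet A.1 B.1))) C.1))
         = pol (pol (mulSet A.1 (pol (pol (mulSet B.1 C.1)))))
      rw [cl_mulSet_left, cl_mulSet_right, mulSet_assoc]
    mul_sSup := by
      intro A s
      apply le_antisymm
      · apply mul_le_iff.mpr
        rw [gq_sSup_val]
        set U : Set (Ph S) := ⋃ B ∈ s, (B : Gq S).1 with hU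
        have hstep : mulSet A.1 U ⊆ (⨆ B ∈ s, A * B).1 := by
          rintro _ ⟨x, hx, y, hy, rfl⟩
          rw [Set.mem_iUnion₂] at hy
          obtain ⟨B, hB, hyB⟩ := hy
          have hAB : A * B ≤ ⨆ B ∈ s, A * B := le_iSup₂ (f := fun B _ => A * B) B hB
          exact hAB (subset_polpol _ ⟨x, hx, y, hyB, rfl⟩)
        intro z hz
        have h1 : z ∈ pol (pol (mulSet A.1 U)) := mulSet_polpol_right A.1 U hz
        have h2 := polpol_mono hstep h1
        rwa [(⨆ B ∈ s, A * B).2] at h2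
      · apply iSup₂_le
        intro B hB
        apply mul_le_iff.mpr
        refine (mulSet_mono (fun _ h => h) ?_).trans (subset_polpol _)
        exact le_sSup hB
    sSup_mul := by
      intro s A
      apply le_antisymm
      · apply mul_le_iff.mpr
        rw [gq_sSup_val]
        set U : Set (Ph S) := ⋃ B ∈ s, (B : Gq S).1 with hU
        have hstep : mulSet U A.1 ⊆ (⨆ B ∈ s, B * A).1 := by
          rintro _ ⟨x, hx, y, hy, rfl⟩
          rw [Set.mem_iUnion₂] at hx
          obtain ⟨B, hB, hxB⟩ := hx
          have hAB : B * A ≤ ⨆ B ∈ s, B * A := le_iSup₂ (f := fun B _ => B * A) B hB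
          exact hAB (subset_polpol _ ⟨x, hxB, y, hy, rfl⟩)
        intro z hz
        have h1 : z ∈ pol (pol (mulSet U A.1)) := mulSet_polpol_left U A.1 hz
        have h2 := polpol_mono hstep h1
        rwa [(⨆ B ∈ s, B * A).2] at h2
      · apply iSup₂_le
        intro B hB
        apply mul_le_iff.mpr
        refine (mulSet_mono ?_ (fun _ h => h)).trans (subset_polpol _)
        exact le_sSup hB }

lemma pol_one_eq_D : pol {Ph.one} = (D : Set (Ph S)) := by
  ext w
  simp [mem_pol]

lemma D_closed : pol (pol (D : Set (Ph S))) = D := by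
  rw [← pol_one_eq_D, pol_pol_pol]

/-- The dualizing element. -/
noncomputable def dElt : Gq S := ⟨D, D_closed⟩

/-- The polar as an operation on facts. -/
noncomputable def polFact (A : Gq S) : Gq S := ⟨pol A.1, pol_pol_pol A.1⟩

lemma polFact_polFact (A : Gq S) : polFact (polFact A) = A := Subtype.ext A.2

lemma polFact_le_polFact_iff {A B : Gq S} : polFact A ≤ polFact B ↔ B ≤ A := by
  constructor
  · intro h
    show B.1 ⊆ A.1
    have h2 : pol (pol B.1) ⊆ pol (pol A.1) := pol_anti h
    rw [A.2, B.2] at h2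
    exact h2
  · intro h
    exact pol_anti h

lemma set_eq_Iic (A : Gq S) :
    {y : Gq S | A * y ≤ dElt} = Set.Iic (polFact A) := by
  ext y
  rw [Set.mem_setOf_eq, Set.mem_Iic, mul_le_iff]
  constructor
  · intro h z hz x hx
    exact h ⟨x, hx, z, hz, rfl⟩
  · rintro h _ ⟨x, hx, z, hz, rfl⟩
    exact h hz x hx

lemma set_eq_Iic' (A : Gq S) :
    {x : Gq S | x * A ≤ dElt} = Set.Iic (polFact A) := by
  ext x
  rw [Set.mem_setOf_eq, Set.mem_Iic, mul_le_iff]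
  constructor
  · intro h u hu w hw
    exact (mulD_comm u w).mp (h ⟨u, hu, w, hw, rfl⟩)
  · rintro h _ ⟨u, hu, w, hw, rfl⟩
    exact (mulD_comm w u).mp (h hu w hw)

lemma sSup_Iic' (a : Gq S) : sSup (Set.Iic a) = a :=
  le_antisymm (sSup_le fun _ h => h) (le_sSup Set.self_mem_Iic)

lemma dElt_is_cyclic_dualizing : IsCyclicDualizing (dElt : Gq S) := by
  refine ⟨?_, ?_, ?_⟩
  · intro A B
    rw [mul_le_iff, mul_le_iff]
    constructor
    · rintro h _ ⟨y, hy, x, hx, rfl⟩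
      exact (mulD_comm x y).mp (h ⟨x, hx, y, hy, rfl⟩)
    · rintro h _ ⟨x, hx, y, hy, rfl⟩
      exact (mulD_comm y x).mp (h ⟨y, hy, x, hx, rfl⟩)
  · intro A
    rw [set_eq_Iic A, sSup_Iic', set_eq_Iic' (polFact A), polFact_polFact, sSup_Iic']
  · intro A
    rw [set_eq_Iic' A, sSup_Iic', set_eq_Iic (polFact A), polFact_polFact, sSup_Iic']

lemma top_val : ((⊤ : Gq S)).1 = Set.univ := by
  apply Set.Subset.antisymm (Set.subset_univ _)
  have huc : pol (pol (Set.univ : Set (Ph S))) = Set.univ :=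
    Set.Subset.antisymm (Set.subset_univ _) (subset_polpol _)
  exact le_top (a := (⟨Set.univ, huc⟩ : Gq S))

lemma right_sided_iff {r : Gq S} : r * ⊤ ≤ r ↔ mulSet r.1 Set.univ ⊆ r.1 := by
  rw [mul_le_iff, top_val]

lemma left_sided_iff {l : Gq S} : ⊤ * l ≤ l ↔ mulSet Set.univ l.1 ⊆ l.1 := by
  rw [mul_le_iff, top_val]

/-- The right-sided fact attached to `s : S`. -/
noncomputable def FrSet (s : S) : Set (Ph S) := pol {Ph.pr ⊤ s}

@[simp] lemma mem_Fr_zero {s : S} : Ph.zero ∈ FrSet s := by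
  intro x hx
  rw [Set.mem_singleton_iff] at hx
  subst hx
  simp

@[simp] lemma mem_Fr_one {s : S} : Ph.one ∈ FrSet s ↔ ⊤ ≤ s := by
  constructor
  · intro h
    have := h _ (Set.mem_singleton _)
    rwa [mul_one, mem_D_pr] at this
  · intro h x hx
    rw [Set.mem_singleton_iff] at hx
    subst hx
    rw [mul_one, mem_D_pr]
    exact h

@[simp] lemma mem_Fr_pr {s b m : S} : Ph.pr b m ∈ FrSet s ↔ (b ≤ s ∨ ⊤ ≤ m) := by
  constructor
  · intro h
    have := h _ (Set.mem_singleton _)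
    rwa [pr_mul_mem_D] at this
  · intro h x hx
    rw [Set.mem_singleton_iff] at hx
    subst hx
    rw [pr_mul_mem_D]
    exact h

noncomputable def Fr (s : S) : Gq S := ⟨FrSet s, pol_pol_pol _⟩

lemma Fr_right_sided (s : S) : Fr s * ⊤ ≤ Fr s := by
  rw [right_sided_iff]
  rintro _ ⟨z, hz, w, -, rfl⟩
  replace hz : z ∈ FrSet s := hz
  show z * w ∈ FrSet s
  cases z with
  | zero => simpa using mem_Fr_zero
  | one =>
    rw [mem_Fr_one] at hz
    rw [one_mul]
    cases w with
    | zero => exact mem_Fr_zero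
    | one => exact mem_Fr_one.mpr hz
    | pr b m => exact mem_Fr_pr.mpr (Or.inl (le_top.trans hz))
  | pr c v =>
    rw [mem_Fr_pr] at hz
    cases w with
    | zero => simpa using mem_Fr_zero
    | one => rw [mul_one]; exact mem_Fr_pr.mpr hz
    | pr b m =>
      rw [pr_mul_pr]
      split_ifs with hb
      · exact mem_Fr_zero
      · rcases hz with hz | hz
        · exact mem_Fr_pr.mpr (Or.inl hz)
        · exact absurd (le_top.trans hz) hb

lemma Fr_le_Fr_iff {s t : S} : Fr s ≤ Fr t ↔ s ≤ t := by
  constructor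
  · intro h
    have h1 : Ph.pr s ⊥ ∈ FrSet s := mem_Fr_pr.mpr (Or.inl le_rfl)
    have h2 : Ph.pr s ⊥ ∈ FrSet t := h h1
    rw [mem_Fr_pr] at h2
    rcases h2 with h2 | h2
    · exact h2
    · exact (le_top.trans h2).trans bot_le
  · intro h z hz
    replace hz : z ∈ FrSet s := hz
    show z ∈ FrSet t
    cases z with
    | zero => exact mem_Fr_zero
    | one =>
      rw [mem_Fr_one] at hz ⊢
      exact hz.trans h
    | pr b m =>
      rw [mem_Fr_pr] at hz ⊢
      rcases hz with hz | hz
      · exact Or.inl (hz.trans h)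
      · exact Or.inr hz

/-- Key closure lemma: the pair `(sSup A, ⊥)` belongs to any fact `r`, where
`A` is the set of `a` with `(a, ⊥) ∈ r`. -/
lemma pr_sSup_mem (r : Gq S) :
    Ph.pr (sSup {a : S | Ph.pr a ⊥ ∈ r.1}) ⊥ ∈ r.1 := by
  set A := {a : S | Ph.pr a ⊥ ∈ r.1} with hA
  rw [← r.2]
  intro w hw
  cases w with
  | zero => simp
  | one =>
    rw [one_mul, mem_D_pr]
    apply sSup_le
    intro a ha
    have := hw _ ha
    rwa [mul_one, mem_D_pr] at this
  | pr c v =>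
    rw [pr_mul_mem_D]
    by_cases hc : c ≤ ⊥
    · exact Or.inr hc
    · left
      apply sSup_le
      intro a ha
      have := hw _ ha
      rw [pr_mul_mem_D] at this
      rcases this with h | h
      · exact absurd h hc
      · exact h

lemma Fr_surj (r : Gq S) (hr : r * ⊤ ≤ r) :
    FrSet (sSup {a : S | Ph.pr a ⊥ ∈ r.1}) = r.1 := by
  set A := {a : S | Ph.pr a ⊥ ∈ r.1} with hA
  set s := sSup A with hs
  have hr' : mulSet r.1 Set.univ ⊆ r.1 := right_sided_iff.mp hr
  apply Set.Subset.antisymm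
  · -- FrSet s ⊆ r.1
    intro z hz
    rw [← r.2]
    intro w hw
    cases w with
    | zero => simp
    | one =>
      rw [one_mul]
      have hrD : ∀ x ∈ r.1, x ∈ (D : Set (Ph S)) := by
        intro x hx
        have := hw x hx
        rwa [mul_one] at this
      have hsb : s ≤ ⊥ := by
        apply sSup_le
        intro a ha
        have := hrD _ ha
        rwa [mem_D_pr] at this
      cases z with
      | zero => simp
      | one => simp
      | pr c v =>
        rw [mem_Fr_pr] at hz
        rw [mem_D_pr]
        rcases hz with hz | hz
        · exact (hz.trans hsb).trans bot_le
        · exact le_top.trans hz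
    | pr b m =>
      cases z with
      | zero => simp
      | one =>
        rw [mul_one, mem_D_pr]
        rw [mem_Fr_one] at hz
        have hm := hw _ (pr_sSup_mem r)
        rw [pr_mul_mem_D] at hm
        rcases hm with h | h
        · exact h.trans bot_le
        · exact (le_top.trans hz).trans h
      | pr c v =>
        rw [mem_Fr_pr] at hz
        rw [pr_mul_mem_D]
        by_cases hb : b ≤ ⊥
        · exact Or.inr (hb.trans bot_le)
        · have hmu : ∀ a ∈ A, a ≤ m := by
            intro a ha
            have := hw _ ha
            rw [pr_mul_mem_D] at this
            rcases this with h | h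
            · exact absurd h hb
            · exact h
          rcases hz with hz | hz
          · exact Or.inl (hz.trans (sSup_le hmu))
          · exact Or.inr (le_top.trans hz)
  · -- r.1 ⊆ FrSet s
    intro z hz
    cases z with
    | zero => exact mem_Fr_zero
    | one =>
      rw [mem_Fr_one]
      have h1 : Ph.one * Ph.pr ⊤ ⊥ ∈ mulSet r.1 Set.univ :=
        ⟨Ph.one, hz, Ph.pr ⊤ ⊥, trivial, rfl⟩
      rw [one_mul] at h1
      exact le_sSup (hr' h1)
    | pr a v =>
      rw [mem_Fr_pr]
      by_cases hv : ⊤ ≤ v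
      · exact Or.inr hv
      · left
        have h1 : Ph.pr a v * Ph.pr ⊤ ⊥ ∈ mulSet r.1 Set.univ :=
          ⟨Ph.pr a v, hz, Ph.pr ⊤ ⊥, trivial, rfl⟩
        rw [pr_mul_pr, if_neg hv] at h1
        exact le_sSup (hr' h1)

/-- The order isomorphism `S ≃o` right-sided part. -/
noncomputable def eR : S ≃o {r : Gq S // r * ⊤ ≤ r} where
  toFun s := ⟨Fr s, Fr_right_sided s⟩
  invFun r := sSup {a : S | Ph.pr a ⊥ ∈ r.1.1}
  left_inv s := by
    have h : {a : S | Ph.pr a ⊥ ∈ (Fr s).1} = Set.Iic s := by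
      ext a
      rw [Set.mem_setOf_eq, Set.mem_Iic]
      show Ph.pr a ⊥ ∈ FrSet s ↔ a ≤ s
      rw [mem_Fr_pr]
      constructor
      · rintro (h | h)
        · exact h
        · exact ((le_top.trans h).trans bot_le)
      · exact Or.inl
    simp only [h]
    exact le_antisymm (sSup_le fun _ hb => hb) (le_sSup Set.self_mem_Iic)
  right_inv r := Subtype.ext (Subtype.ext (Fr_surj r.1 r.2))
  map_rel_iff' := by
    intro s t
    show Fr s ≤ Fr t ↔ s ≤ t
    exact Fr_le_Fr_iff

lemma rs_polFact {l : Gq S} (hl : ⊤ * l ≤ l) : polFact l * ⊤ ≤ polFact l := by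
  rw [right_sided_iff]
  rintro _ ⟨z, hz, w, -, rfl⟩
  intro x hx
  have hwx : w * x ∈ l.1 := left_sided_iff.mp hl ⟨w, trivial, x, hx, rfl⟩
  have h1 : (w * x) * z ∈ D := hz _ hwx
  have h2 : z * (w * x) ∈ D := (mulD_comm _ _).mp h1
  rw [← ph_assoc] at h2
  exact (mulD_comm _ _).mp h2

lemma ls_polFact {r : Gq S} (hr : r * ⊤ ≤ r) : ⊤ * polFact r ≤ polFact r := by
  rw [left_sided_iff]
  rintro _ ⟨w, -, z, hz, rfl⟩
  intro x hx
  have hxw : x * w ∈ r.1 := right_sided_iff.mp hr ⟨x, hx, w, trivial, rfl⟩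
  have h1 : (x * w) * z ∈ D := hz _ hxw
  rwa [ph_assoc] at h1

/-- The left-sided part is dual to the right-sided part. -/
noncomputable def eL : {l : Gq S // ⊤ * l ≤ l} ≃o ({r : Gq S // r * ⊤ ≤ r})ᵒᵈ where
  toFun l := OrderDual.toDual ⟨polFact l.1, rs_polFact l.2⟩
  invFun r := ⟨polFact (OrderDual.ofDual r).1, ls_polFact (OrderDual.ofDual r).2⟩
  left_inv l := Subtype.ext (polFact_polFact l.1)
  right_inv r := by
    apply OrderDual.toDual.injective
    exact Subtype.ext (polFact_polFact (OrderDual.ofDual r).1)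
  map_rel_iff' := by
    intro a b
    show (⟨polFact b.1, _⟩ : {r : Gq S // r * ⊤ ≤ r}) ≤ ⟨polFact a.1, _⟩ ↔ a ≤ b
    show polFact b.1 ≤ polFact a.1 ↔ a.1 ≤ b.1
    exact polFact_le_polFact_iff

end Stmt18Aux

/-- For every complete lattice `S` there is a Girard quantale whose right-sided
part is isomorphic to `S` and whose left-sided part is isomorphic to `S^op`. -/
theorem stmt18 (S : Type u) [CompleteLattice S] :
    ∃ (G : Type u) (_ : Quantale' G) (d : G),
      IsCyclicDualizing d ∧
      Nonempty ({r : G // r * ⊤ ≤ r} ≃o S) ∧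
      Nonempty ({l : G // ⊤ * l ≤ l} ≃o Sᵒᵈ) := by
  classical
  refine ⟨Stmt18Aux.Gq S, Stmt18Aux.gqQuantale, Stmt18Aux.dElt,
    Stmt18Aux.dElt_is_cyclic_dualizing, ⟨Stmt18Aux.eR.symm⟩,
    ⟨Stmt18Aux.eL.trans Stmt18Aux.eR.symm.dual⟩⟩
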